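/- arXiv:2012.07361 — 7 statements merged into one kernel-verified Lean document; each statement's English description precedes it below -/
import Mathlib

section
/- Over the field F_p(λ, μ) of rational functions in two variables over F_p, the p×p matrices A (upper bidiagonal with λ on the diagonal and entries 1, 2, ..., p-1 on the superdiagonal) and B (with μ in the top-right corner and 1's on the subdiagonal, zeros elsewhere) satisfy AB - BA = I_p. -/
/-- The field `F_p(λ, μ)` of rational functions in two variables over `F_p`. -/
abbrev RatFunc2 (p : ℕ) : Type := FractionRing (MvPolynomial (Fin 2) (ZMod p))

noncomputable def lamVar (p : ℕ) : RatFunc2 p :=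
  algebraMap (MvPolynomial (Fin 2) (ZMod p)) (RatFunc2 p) (MvPolynomial.X 0)

noncomputable def muVar (p : ℕ) : RatFunc2 p :=
  algebraMap (MvPolynomial (Fin 2) (ZMod p)) (RatFunc2 p) (MvPolynomial.X 1)

/-- The `p×p` matrix with `λ` on the diagonal and `1, 2, …, p-1` on the superdiagonal. -/
noncomputable def matA (p : ℕ) : Matrix (Fin p) (Fin p) (RatFunc2 p) :=
  Matrix.of fun i j =>
    if i = j then lamVar p
    else if (j : ℕ) = (i : ℕ) + 1 then (((i : ℕ) + 1 : ℕ) : RatFunc2 p)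
    else 0

/-- The `p×p` matrix with `μ` in the top-right corner and `1`'s on the subdiagonal. -/
noncomputable def matB (p : ℕ) : Matrix (Fin p) (Fin p) (RatFunc2 p) :=
  Matrix.of fun i j =>
    if (i : ℕ) = 0 ∧ (j : ℕ) = p - 1 then muVar p
    else if (i : ℕ) = (j : ℕ) + 1 then 1
    else 0

lemma cast_p (p : ℕ) [Fact p.Prime] : ((p : ℕ) : RatFunc2 p) = 0 := by
  have : CharP (RatFunc2 p) p :=
    charP_of_injective_algebraMap
      (IsFractionRing.injective (MvPolynomial (Fin 2) (ZMod p)) (RatFunc2 p)) p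
  exact CharP.cast_eq_zero _ p

lemma val_add_one (p : ℕ) [Fact p.Prime] (i : Fin p) :
    ((i+1 : Fin p) : ℕ) = if (i:ℕ)+1 = p then 0 else (i:ℕ)+1 := by
  have hp : 2 ≤ p := (Fact.out : p.Prime).two_le
  have hi := i.isLt
  have h : ((i+1 : Fin p) : ℕ) = ((i:ℕ)+1) % p := by
    simp [Fin.add_def, Fin.val_one', Nat.mod_eq_of_lt (show (1:ℕ) < p by omega)]
  rw [h]
  split_ifs with h1
  · rw [h1, Nat.mod_self]
  · exact Nat.mod_eq_of_lt (by omega)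

lemma val_sub_one (p : ℕ) [Fact p.Prime] (i : Fin p) :
    ((i-1 : Fin p) : ℕ) = if (i:ℕ) = 0 then p - 1 else (i:ℕ) - 1 := by
  have hp : 2 ≤ p := (Fact.out : p.Prime).two_le
  have hi := i.isLt
  have h : ((i-1 : Fin p) : ℕ) = ((p-1) + (i:ℕ)) % p := by
    simp [Fin.sub_def, Fin.val_one', Nat.mod_eq_of_lt (show (1:ℕ) < p by omega)]
  rw [h]
  split_ifs with h1
  · rw [h1]; exact Nat.mod_eq_of_lt (by omega)
  · have h2 : (p-1) + (i:ℕ) = ((i:ℕ)-1) + 1*p := by omega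
    rw [h2, Nat.add_mul_mod_self_right]
    exact Nat.mod_eq_of_lt (by omega)

lemma matA_eq (p : ℕ) [Fact p.Prime] (i k : Fin p) :
    matA p i k = lamVar p * (if i = k then 1 else 0)
      + (((i:ℕ)+1 : ℕ) : RatFunc2 p) * (if k = i + 1 then 1 else 0) := by
  have hp : 2 ≤ p := (Fact.out : p.Prime).two_le
  have h1 := val_add_one p i
  have hi := i.isLt
  have hk := k.isLt
  by_cases hip : (i:ℕ) + 1 = p
  · rw [if_pos hip] at h1
    have hpz : (((i:ℕ)+1 : ℕ) : RatFunc2 p) = 0 := by rw [hip]; exact cast_p p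
    rw [hpz]
    simp only [matA, Matrix.of_apply, Fin.ext_iff, h1, zero_mul, add_zero, mul_ite,
      mul_one, mul_zero]
    split_ifs <;> first | (exfalso; omega) | contradiction | (exfalso; exact (‹False ∧ _›).1) | simp [hpz]
  · rw [if_neg hip] at h1
    simp only [matA, Matrix.of_apply, Fin.ext_iff, h1, mul_ite, mul_one, mul_zero]
    split_ifs <;> first | rfl | omega | simp

lemma matB_eq (p : ℕ) [Fact p.Prime] (i k : Fin p) :
    matB p i k = (if (i:ℕ) = 0 then muVar p else 1) * (if k = i - 1 then 1 else 0) := by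
  have hp : 2 ≤ p := (Fact.out : p.Prime).two_le
  have h2 := val_sub_one p i
  have hi := i.isLt
  have hk := k.isLt
  by_cases hi0 : (i:ℕ) = 0
  · rw [if_pos hi0] at h2
    simp only [matB, Matrix.of_apply, Fin.ext_iff, h2, if_pos hi0, mul_ite, mul_one, mul_zero]
    split_ifs <;> first | rfl | omega | simp
  · rw [if_neg hi0] at h2
    simp only [matB, Matrix.of_apply, Fin.ext_iff, h2, if_neg hi0, one_mul]
    split_ifs <;> first | rfl | omega | simp

set_option maxHeartbeats 1000000 in
theorem stmt_1 (p : ℕ) [Fact p.Prime] :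
    matA p * matB p - matB p * matA p = 1 := by
  have hp : 2 ≤ p := (Fact.out : p.Prime).two_le
  ext i j
  rw [Matrix.sub_apply, Matrix.mul_apply, Matrix.mul_apply, Matrix.one_apply]
  have hAB : ∑ k, matA p i k * matB p k j
      = lamVar p * matB p i j + (((i:ℕ)+1 : ℕ) : RatFunc2 p) * matB p (i+1) j := by
    have e : ∀ k, matA p i k * matB p k j
        = (if i = k then lamVar p * matB p k j else 0)
          + (if k = i + 1 then (((i:ℕ)+1 : ℕ) : RatFunc2 p) * matB p k j else 0) := by
      intro k
      rw [matA_eq, add_mul]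
      congr 1 <;> split_ifs <;> ring
    rw [Finset.sum_congr rfl fun k _ => e k, Finset.sum_add_distrib,
      Finset.sum_ite_eq, Finset.sum_ite_eq', if_pos (Finset.mem_univ _),
      if_pos (Finset.mem_univ _)]
  have hBA : ∑ k, matB p i k * matA p k j
      = (if (i:ℕ) = 0 then muVar p else 1) * matA p (i-1) j := by
    have e : ∀ k, matB p i k * matA p k j
        = (if k = i - 1 then (if (i:ℕ) = 0 then muVar p else 1) * matA p k j else 0) := by
      intro k
      rw [matB_eq]
      split_ifs <;> ring
    rw [Finset.sum_congr rfl fun k _ => e k, Finset.sum_ite_eq',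
      if_pos (Finset.mem_univ _)]
  rw [hAB, hBA]
  have h1 := val_add_one p i
  have h2 := val_sub_one p i
  have hi := i.isLt
  have hj := j.isLt
  by_cases hi0 : (i:ℕ) = 0
  · rw [if_pos hi0]
    have hip : ¬((i:ℕ)+1 = p) := by omega
    rw [if_neg hip] at h1
    rw [if_pos hi0] at h2
    simp only [matA, matB, Matrix.of_apply, Fin.ext_iff, h1, h2, hi0, true_and, false_and, if_false, zero_add]
    split_ifs <;> first | (exfalso; omega) | contradiction | (exfalso; exact (‹False ∧ _›).1) | (push_cast; ring1)
  · rw [if_neg hi0]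
    rw [if_neg hi0] at h2
    by_cases hip : (i:ℕ)+1 = p
    · rw [if_pos hip] at h1
      have hc : ((i:ℕ) : RatFunc2 p) + 1 = 0 := by
        have h : (((i:ℕ)+1 : ℕ) : RatFunc2 p) = 0 := by rw [hip]; exact cast_p p
        push_cast at h
        exact h
      have hneg : (((i:ℕ) : ℕ) : RatFunc2 p) = -1 := by linear_combination hc
      simp only [matA, matB, Matrix.of_apply, Fin.ext_iff, h1, h2, true_and, false_and, if_false,
        show ((i:ℕ))-1+1 = (i:ℕ) from by omega]
      split_ifs <;> first | (exfalso; omega) | contradiction | (exfalso; exact (‹False ∧ _›).1) | (push_cast; ring1) | (push_cast; rw [hneg]; ring1) | (push_cast; rw [hneg, hneg]; ring1)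
    · rw [if_neg hip] at h1
      simp only [matA, matB, Matrix.of_apply, Fin.ext_iff, h1, h2, true_and, false_and, if_false,
        show ((i:ℕ))-1+1 = (i:ℕ) from by omega]
      split_ifs <;> first | (exfalso; omega) | contradiction | (exfalso; exact (‹False ∧ _›).1) | (push_cast; ring1)
end

section
/- Let M_1, M_2, M_3 be invertible k×k matrices over a field F. The 3k×3k block matrix [[I_k, I_k, I_k], [M_1, 0, M_3], [0, M_2, I_k]] has rank equal to 2k + rank(M_1 + M_3·M_2 - M_1·M_2). -/
open Matrix

section aux

variable {F : Type} [Field F]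

private def prodSubEquiv {M N : Type*} [AddCommGroup M] [AddCommGroup N]
    [Module F M] [Module F N] (p : Submodule F M) (q : Submodule F N) :
    (p.prod q) ≃ₗ[F] p × q where
  toFun x := (⟨x.1.1, x.2.1⟩, ⟨x.1.2, x.2.2⟩)
  invFun x := ⟨(x.1.1, x.2.1), ⟨x.1.2, x.2.2⟩⟩
  map_add' _ _ := rfl
  map_smul' _ _ := rfl
  left_inv _ := rfl
  right_inv _ := rfl

private lemma finrank_submodule_prod {M N : Type*} [AddCommGroup M] [AddCommGroup N]
    [Module F M] [Module F N] [FiniteDimensional F M] [FiniteDimensional F N]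
    (p : Submodule F M) (q : Submodule F N) :
    Module.finrank F (p.prod q) = Module.finrank F p + Module.finrank F q := by
  rw [← Module.finrank_prod]
  exact (prodSubEquiv p q).finrank_eq

private lemma range_prodMap' {M M₂ N N₂ : Type*} [AddCommGroup M] [AddCommGroup M₂]
    [AddCommGroup N] [AddCommGroup N₂] [Module F M] [Module F M₂] [Module F N] [Module F N₂]
    (f : M →ₗ[F] N) (g : M₂ →ₗ[F] N₂) :
    LinearMap.range (f.prodMap g) = (LinearMap.range f).prod (LinearMap.range g) := by
  ext x
  simp only [LinearMap.mem_range, Submodule.mem_prod, LinearMap.prodMap_apply, Prod.ext_iff]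
  constructor
  · rintro ⟨y, hy1, hy2⟩
    exact ⟨⟨y.1, hy1⟩, ⟨y.2, hy2⟩⟩
  · rintro ⟨⟨a, ha⟩, ⟨b, hb⟩⟩
    exact ⟨(a, b), ha, hb⟩

private lemma rank_fromBlocks_diag {m n : Type*} [Fintype m] [Fintype n]
    [DecidableEq m] [DecidableEq n] (A : Matrix m m F) (D : Matrix n n F) :
    (Matrix.fromBlocks A 0 0 D).rank = A.rank + D.rank := by
  classical
  set e := LinearEquiv.sumArrowLequivProdArrow m n F F with he
  have key : (Matrix.fromBlocks A 0 0 D).mulVecLin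
      = e.symm.toLinearMap ∘ₗ (A.mulVecLin.prodMap D.mulVecLin) ∘ₗ e.toLinearMap := by
    apply LinearMap.ext; intro x
    funext i
    cases i <;>
      simp [he, Matrix.mulVecLin_apply, Matrix.fromBlocks_mulVec, Matrix.zero_mulVec,
        LinearEquiv.sumArrowLequivProdArrow, Equiv.sumArrowEquivProdArrow]
  rw [Matrix.rank, key, LinearMap.range_comp,
    LinearMap.range_comp_of_range_eq_top _ (LinearEquiv.range e),
    range_prodMap', LinearEquiv.finrank_map_eq, finrank_submodule_prod]
  rfl

variable {k : ℕ}

private def blk (b : Fin 3 → Fin 3 → Matrix (Fin k) (Fin k) F) :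
    Matrix (Fin 3 × Fin k) (Fin 3 × Fin k) F :=
  Matrix.of fun q r => b q.1 r.1 q.2 r.2

private lemma blk_mul (b c : Fin 3 → Fin 3 → Matrix (Fin k) (Fin k) F) :
    blk b * blk c = blk fun i j => b i 0 * c 0 j + b i 1 * c 1 j + b i 2 * c 2 j := by
  ext ⟨i, x⟩ ⟨j, y⟩
  simp [blk, Matrix.mul_apply, Fintype.sum_prod_type, Fin.sum_univ_three, Matrix.add_apply,
    Finset.sum_add_distrib]

private lemma blk_one : (blk ![![1,0,0],![0,1,0],![0,0,1]] : Matrix (Fin 3 × Fin k) _ F) = 1 := by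
  ext ⟨i, x⟩ ⟨j, y⟩
  fin_cases i <;> fin_cases j <;>
    simp [blk, Matrix.one_apply, Prod.ext_iff, Matrix.vecHead, Matrix.vecTail]

end aux

theorem stmt_5 {F : Type} [Field F] (k : ℕ) (hk : 1 ≤ k)
    (M₁ M₂ M₃ : Matrix (Fin k) (Fin k) F)
    (h₁ : IsUnit M₁) (h₂ : IsUnit M₂) (h₃ : IsUnit M₃) :
    (Matrix.of fun (q : Fin 3 × Fin k) (r : Fin 3 × Fin k) =>
        (![![1, 1, 1], ![M₁, 0, M₃], ![0, M₂, 1]] :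
          Fin 3 → Fin 3 → Matrix (Fin k) (Fin k) F) q.1 r.1 q.2 r.2).rank
      = 2 * k + (M₁ + M₃ * M₂ - M₁ * M₂).rank := by
  classical
  set S : Matrix (Fin k) (Fin k) F := M₁ + M₃ * M₂ - M₁ * M₂ with hS
  set B : Matrix (Fin 3 × Fin k) (Fin 3 × Fin k) F :=
    blk ![![1, 1, 1], ![M₁, 0, M₃], ![0, M₂, 1]] with hB
  set P : Matrix (Fin 3 × Fin k) (Fin 3 × Fin k) F :=
    blk ![![1,0,0],![-M₁,1,-(M₃-M₁)],![0,0,1]] with hP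
  set Pinv : Matrix (Fin 3 × Fin k) (Fin 3 × Fin k) F :=
    blk ![![1,0,0],![M₁,1,M₃-M₁],![0,0,1]] with hPinv
  set Q : Matrix (Fin 3 × Fin k) (Fin 3 × Fin k) F :=
    blk ![![1,M₂-1,-1],![0,1,0],![0,-M₂,1]] with hQ
  set Qinv : Matrix (Fin 3 × Fin k) (Fin 3 × Fin k) F :=
    blk ![![1,1,1],![0,1,0],![0,M₂,1]] with hQinv
  set D : Matrix (Fin 3 × Fin k) (Fin 3 × Fin k) F :=
    blk ![![1,0,0],![0,-S,0],![0,0,1]] with hD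
  have hPP : P * Pinv = 1 := by
    rw [hP, hPinv, blk_mul, ← blk_one]
    refine congrArg blk ?_
    funext i j
    fin_cases i <;> fin_cases j <;>
      simp [Matrix.vecHead, Matrix.vecTail] <;> noncomm_ring
  have hPP' : Pinv * P = 1 := by
    rw [hP, hPinv, blk_mul, ← blk_one]
    refine congrArg blk ?_
    funext i j
    fin_cases i <;> fin_cases j <;>
      simp [Matrix.vecHead, Matrix.vecTail] <;> noncomm_ring
  have hQQ : Q * Qinv = 1 := by
    rw [hQ, hQinv, blk_mul, ← blk_one]
    refine congrArg blk ?_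
    funext i j
    fin_cases i <;> fin_cases j <;>
      simp [Matrix.vecHead, Matrix.vecTail] <;> noncomm_ring
  have hQQ' : Qinv * Q = 1 := by
    rw [hQ, hQinv, blk_mul, ← blk_one]
    refine congrArg blk ?_
    funext i j
    fin_cases i <;> fin_cases j <;>
      simp [Matrix.vecHead, Matrix.vecTail] <;> noncomm_ring
  have hPunit : IsUnit P := ⟨⟨P, Pinv, hPP, hPP'⟩, rfl⟩
  have hQunit : IsUnit Q := ⟨⟨Q, Qinv, hQQ, hQQ'⟩, rfl⟩
  have hPBQ : P * B * Q = D := by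
    rw [hP, hB, blk_mul, hQ, blk_mul, hD]
    refine congrArg blk ?_
    funext i j
    fin_cases i <;> fin_cases j <;>
      simp [hS, Matrix.vecHead, Matrix.vecTail] <;> noncomm_ring
  have hrankB : B.rank = D.rank := by
    rw [← hPBQ, Matrix.rank_mul_eq_left_of_isUnit_det _ _
      ((Matrix.isUnit_iff_isUnit_det _).mp hQunit),
      Matrix.rank_mul_eq_right_of_isUnit_det _ _
      ((Matrix.isUnit_iff_isUnit_det _).mp hPunit)]
  -- compute rank of D via sum-index reindexing
  let s : (Fin k ⊕ (Fin k ⊕ Fin k)) ≃ (Fin 3 × Fin k) :=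
    { toFun := Sum.elim (fun x => (0, x)) (Sum.elim (fun x => (1, x)) (fun x => (2, x)))
      invFun := fun p => if p.1 = 0 then Sum.inl p.2 else
        if p.1 = 1 then Sum.inr (Sum.inl p.2) else Sum.inr (Sum.inr p.2)
      left_inv := by rintro (x | x | x) <;> simp
      right_inv := by
        rintro ⟨i, x⟩
        fin_cases i <;> simp }
  have hsub : D.submatrix s s
      = Matrix.fromBlocks 1 0 0 (Matrix.fromBlocks (-S) 0 0 1) := by
    ext (i | i | i) (j | j | j) <;>
      simp [hD, blk, s, Matrix.fromBlocks, Matrix.vecHead, Matrix.vecTail]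
  have hrankD : D.rank = k + (S.rank + k) := by
    have h1 : (-S).rank = S.rank := by
      have : (-S) = (-1 : Matrix (Fin k) (Fin k) F) * S := by rw [neg_one_mul]
      rw [this, Matrix.rank_mul_eq_right_of_isUnit_det _ _
        ((Matrix.isUnit_iff_isUnit_det (-1 : Matrix (Fin k) (Fin k) F)).mp isUnit_one.neg)]
    rw [← Matrix.rank_submatrix D s s, hsub, rank_fromBlocks_diag, rank_fromBlocks_diag,
      Matrix.rank_one, h1, Fintype.card_fin]
  show B.rank = 2 * k + S.rank
  rw [hrankB, hrankD]
  ring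
end

section
/- Every finitely generated subgroup of GL_n(F) for a field F is residually finite (Mal'cev's theorem). -/
open Matrix

lemma malcev_int_jacobson : IsJacobsonRing ℤ := by
  refine isJacobsonRing_iff_prime_eq.mpr fun P hP => ?_
  by_cases hbot : P = ⊥
  · subst hbot
    refine le_antisymm (fun x hx => ?_) (Ideal.le_jacobson)
    rw [Ideal.jacobson] at hx
    rw [Ideal.mem_bot]
    by_contra hx0
    obtain ⟨p, hple, hp⟩ := Nat.exists_infinite_primes (x.natAbs + 1)
    have hpZ : Prime (p : ℤ) := Int.prime_iff_natAbs_prime.mpr (by simpa using hp)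
    have hmax : (Ideal.span {(p : ℤ)}).IsMaximal :=
      PrincipalIdealRing.isMaximal_of_irreducible hpZ.irreducible
    have hxmem : x ∈ Ideal.span {(p : ℤ)} :=
      (Submodule.mem_sInf.mp hx) _ ⟨bot_le, hmax⟩
    have hdvd : (p : ℤ) ∣ x := Ideal.mem_span_singleton.mp hxmem
    have : p ∣ x.natAbs := Int.natAbs_dvd_natAbs.mpr (by simpa using hdvd)
    have := Nat.le_of_dvd (Int.natAbs_pos.mpr hx0) this
    omega
  · have : P.IsMaximal := IsPrime.to_maximal_ideal hbot
    exact Ideal.jacobson_eq_self_of_isMaximal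

lemma malcev_ft_transfer {M : Type*} [CommRing M] (I J : Algebra ℤ M)
    (h : @Algebra.FiniteType ℤ M _ _ I) : @Algebra.FiniteType ℤ M _ _ J := by
  rwa [Subsingleton.elim I J] at h

lemma malcev_module_transfer {M : Type*} [AddCommGroup M] (I J : Module ℤ M)
    (h : @Module.Finite ℤ M _ _ I) : @Module.Finite ℤ M _ _ J := by
  haveI : Unique (Module ℤ M) := AddCommGroup.uniqueIntModule
  rwa [Subsingleton.elim I J] at h

lemma malcev_finite_field (κ : Type*) [Field κ] [Module.Finite ℤ κ] : Finite κ := by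
  have hint : Algebra.IsIntegral ℤ κ := Algebra.IsIntegral.of_finite ℤ κ
  obtain ⟨p, hp⟩ := CharP.exists κ
  rcases CharP.char_is_prime_or_zero κ p with hprime | hzero
  · have htors : Module.IsTorsion ℤ κ := by
      intro x
      refine ⟨⟨(p : ℤ), mem_nonZeroDivisors_of_ne_zero (by exact_mod_cast hprime.ne_zero)⟩, ?_⟩
      have : ((p : ℤ) : κ) = 0 := by exact_mod_cast CharP.cast_eq_zero κ p
      simp [zsmul_eq_mul, this]
    exact Module.finite_of_fg_torsion κ htors
  · subst hzero
    have : CharZero κ := CharP.charP_to_charZero κ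
    have hinj : Function.Injective (algebraMap ℤ κ) := by
      rw [algebraMap_int_eq]
      exact fun a b h => Int.cast_injective h
    exact absurd (isField_of_isIntegral_of_isField hinj (Field.toIsField κ)) Int.not_isField

lemma malcev_ringhom_ft {S K : Type*} [CommRing S] [CommRing K] [Algebra ℤ S] [Algebra ℤ K]
    (hft : Algebra.FiniteType ℤ S) (f : S →+* K) (hf : Function.Surjective f) :
    Algebra.FiniteType ℤ K :=
  haveI := hft
  Algebra.FiniteType.of_surjective
    { f with
      commutes' := fun r => by
        show f ((algebraMap ℤ S) r) = (algebraMap ℤ K) r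
        rw [eq_intCast (algebraMap ℤ S) r, eq_intCast (algebraMap ℤ K) r, map_intCast] }
    hf

set_option synthInstance.maxHeartbeats 400000 in
lemma malcev_field_ft_finite (K : Type*) [Field K] (hft : Algebra.FiniteType ℤ K) :
    Finite K := by
  haveI : IsJacobsonRing ℤ := malcev_int_jacobson
  haveI := hft
  haveI : Module.Finite ℤ K :=
    malcev_module_transfer _ _ (finite_of_finite_type_of_isJacobsonRing ℤ K)
  exact malcev_finite_field K

/-- The quotient of a finite type ℤ-algebra by a maximal ideal is finite. -/
lemma malcev_quotient_finite (R₀ : Type*) [CommRing R₀] [Algebra ℤ R₀]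
    (hft : Algebra.FiniteType ℤ R₀) (m : Ideal R₀) (hm : m.IsMaximal) :
    Finite (R₀ ⧸ m) := by
  haveI := hm
  haveI : IsJacobsonRing ℤ := malcev_int_jacobson
  have hftq : Algebra.FiniteType ℤ (R₀ ⧸ m) :=
    malcev_ringhom_ft hft (Ideal.Quotient.mk m) Ideal.Quotient.mk_surjective
  exact @malcev_field_ft_finite (R₀ ⧸ m) (Ideal.Quotient.field m)
    (@malcev_ft_transfer (R₀ ⧸ m) (Ideal.Quotient.commRing m) (Ideal.Quotient.algebra ℤ)
      (Ring.toIntAlgebra _) hftq)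

section Malcev

variable {F : Type} [Field F] {n : ℕ}

lemma malcev_one_entry_mem (R : Subalgebra ℤ F) (i j : Fin n) :
    (1 : Matrix (Fin n) (Fin n) F) i j ∈ R := by
  rw [Matrix.one_apply]
  split
  · exact one_mem R
  · exact zero_mem R

/-- The subgroup of GL n F of matrices whose entries and inverse entries lie in R. -/
def malcevSubgroup (R : Subalgebra ℤ F) : Subgroup (GL (Fin n) F) where
  carrier := {g | (∀ i j, (g : Matrix (Fin n) (Fin n) F) i j ∈ R) ∧
      (∀ i j, ((g⁻¹ : GL (Fin n) F) : Matrix (Fin n) (Fin n) F) i j ∈ R)}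
  one_mem' := by
    constructor <;> intro i j <;> simpa using malcev_one_entry_mem R i j
  mul_mem' := by
    rintro a b ⟨ha1, ha2⟩ ⟨hb1, hb2⟩
    constructor
    · intro i j
      rw [Units.val_mul, Matrix.mul_apply]
      exact Subalgebra.sum_mem R fun k _ => mul_mem (ha1 i k) (hb1 k j)
    · intro i j
      rw [_root_.mul_inv_rev, Units.val_mul, Matrix.mul_apply]
      exact Subalgebra.sum_mem R fun k _ => mul_mem (hb2 i k) (ha2 k j)
  inv_mem' := by
    rintro a ⟨ha1, ha2⟩
    refine ⟨ha2, ?_⟩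
    simpa using ha1

end Malcev

set_option maxHeartbeats 1000000 in
set_option synthInstance.maxHeartbeats 400000 in
theorem stmt_9 {F : Type} [Field F] (n : ℕ) (hn : 1 ≤ n)
    (G : Subgroup (GL (Fin n) F)) (hG : Group.FG G) :
    ∀ g : G, g ≠ 1 →
      ∃ (H : Type) (_ : Group H) (φ : G →* H), Finite H ∧ φ g ≠ 1 := by
  obtain ⟨S, hS, hSfin⟩ := Group.fg_iff.mp hG
  set A : Set F :=
      (⋃ g ∈ S, Set.range fun p : Fin n × Fin n =>
        (((g : G) : GL (Fin n) F) : Matrix (Fin n) (Fin n) F) p.1 p.2) ∪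
      (⋃ g ∈ S, Set.range fun p : Fin n × Fin n =>
        ((((g : G) : GL (Fin n) F)⁻¹ : GL (Fin n) F) : Matrix (Fin n) (Fin n) F) p.1 p.2)
        with hA
  have hAfin : A.Finite :=
    (hSfin.biUnion fun _ _ => Set.finite_range _).union
      (hSfin.biUnion fun _ _ => Set.finite_range _)
  set R : Subalgebra ℤ F := Algebra.adjoin ℤ A with hR
  have hRft : Algebra.FiniteType ℤ R :=
    (Subalgebra.fg_iff_finiteType R).mp (Subalgebra.fg_def.mpr ⟨A, hAfin, rfl⟩)
  haveI : IsJacobsonRing ℤ := malcev_int_jacobson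
  haveI : IsJacobsonRing R := isJacobsonRing_of_finiteType (A := ℤ)
  -- every element of G has entries (and inverse entries) in R
  have hle : Subgroup.map G.subtype ⊤ ≤ malcevSubgroup R := by
    rw [← hS, MonoidHom.map_closure, Subgroup.closure_le]
    rintro x ⟨g, hgS, rfl⟩
    constructor
    · intro i j
      exact Algebra.subset_adjoin
        (Set.mem_union_left _ (Set.mem_biUnion hgS ⟨(i, j), rfl⟩))
    · intro i j
      exact Algebra.subset_adjoin
        (Set.mem_union_right _ (Set.mem_biUnion hgS ⟨(i, j), rfl⟩))
  have hmem : ∀ x : G, (x : GL (Fin n) F) ∈ malcevSubgroup R :=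
    fun x => hle ⟨x, trivial, rfl⟩
  intro g hg1
  -- find an entry where g differs from the identity
  have hvalne : ((g : GL (Fin n) F) : Matrix (Fin n) (Fin n) F) ≠ 1 :=
    fun h => hg1 (Subtype.ext (Units.ext h))
  obtain ⟨i, j, hij⟩ : ∃ i j, ((g : GL (Fin n) F) : Matrix (Fin n) (Fin n) F) i j ≠
      (1 : Matrix (Fin n) (Fin n) F) i j := by
    by_contra h
    push_neg at h
    exact hvalne (by ext i j; exact h i j)
  set a : R := ⟨_, (hmem g).1 i j⟩ - ⟨_, malcev_one_entry_mem R i j⟩ with ha_def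
  have ha : a ≠ 0 := by
    intro h
    rw [ha_def, sub_eq_zero, Subtype.ext_iff] at h
    exact hij h
  -- find a maximal ideal avoiding a
  have hjac : (⊥ : Ideal R).jacobson = ⊥ :=
    IsJacobsonRing.out ‹IsJacobsonRing R› (Ideal.bot_prime.isRadical)
  have hanj : a ∉ (⊥ : Ideal R).jacobson := by rw [hjac]; simpa using ha
  rw [Ideal.jacobson] at hanj
  obtain ⟨m, hm, ham⟩ : ∃ m ∈ {J : Ideal R | ⊥ ≤ J ∧ J.IsMaximal}, a ∉ m := by
    by_contra h
    push_neg at h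
    exact hanj (Submodule.mem_sInf.mpr h)
  haveI hmmax : m.IsMaximal := hm.2
  haveI : Finite (R ⧸ m) := malcev_quotient_finite R hRft m hmmax
  haveI : Finite (Matrix (Fin n) (Fin n) (R ⧸ m)) := inferInstance
  haveI hfinH : Finite (GL (Fin n) (R ⧸ m)) := inferInstance
  -- the representation over R
  set ι : R →+* F := R.val.toRingHom with hι
  have hιinj : Function.Injective ι := Subtype.val_injective
  have hinjM : Function.Injective
      (ι.mapMatrix : Matrix (Fin n) (Fin n) R →+* Matrix (Fin n) (Fin n) F) := by
    intro M N h
    ext i' j' : 2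
    exact congrArg (fun P : Matrix (Fin n) (Fin n) F => P i' j') h
  set Mg : G → Matrix (Fin n) (Fin n) R := fun x i' j' => ⟨_, (hmem x).1 i' j'⟩ with hMg
  set Ng : G → Matrix (Fin n) (Fin n) R := fun x i' j' => ⟨_, (hmem x).2 i' j'⟩ with hNg
  have hmapM : ∀ x : G, ι.mapMatrix (Mg x) = ((x : GL (Fin n) F) : Matrix (Fin n) (Fin n) F) :=
    fun x => by ext i' j' : 2; rfl
  have hmapN : ∀ x : G, ι.mapMatrix (Ng x) =
      (((x : GL (Fin n) F)⁻¹ : GL (Fin n) F) : Matrix (Fin n) (Fin n) F) :=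
    fun x => by ext i' j' : 2; rfl
  have key1 : ∀ x : G, Mg x * Ng x = 1 := by
    intro x
    apply hinjM
    rw [_root_.map_mul, _root_.map_one, hmapM, hmapN]
    exact (x : GL (Fin n) F).mul_inv
  have key2 : ∀ x : G, Ng x * Mg x = 1 := by
    intro x
    apply hinjM
    rw [_root_.map_mul, _root_.map_one, hmapM, hmapN]
    exact (x : GL (Fin n) F).inv_mul
  have hMgone : Mg 1 = 1 := by
    apply hinjM
    rw [_root_.map_one, hmapM]
    simp
  have hMgmul : ∀ x y : G, Mg (x * y) = Mg x * Mg y := by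
    intro x y
    apply hinjM
    rw [_root_.map_mul, hmapM, hmapM, hmapM]
    simp
  set ρ : G →* (Matrix (Fin n) (Fin n) R)ˣ :=
    { toFun := fun x => ⟨Mg x, Ng x, key1 x, key2 x⟩
      map_one' := Units.ext hMgone
      map_mul' := fun x y => Units.ext (hMgmul x y) } with hρ
  set φ : G →* GL (Fin n) (R ⧸ m) :=
    (Units.map ((Ideal.Quotient.mk m).mapMatrix.toMonoidHom)).comp ρ with hφ
  refine ⟨GL (Fin n) (R ⧸ m), inferInstance, φ, hfinH, ?_⟩
  intro hφg
  apply ham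
  have hcoe : ((φ g : GL (Fin n) (R ⧸ m)) : Matrix (Fin n) (Fin n) (R ⧸ m)) =
      (Ideal.Quotient.mk m).mapMatrix (Mg g) := by
    rw [hφ]
    rfl
  have h1 : (Ideal.Quotient.mk m).mapMatrix (Mg g) i j =
      (1 : Matrix (Fin n) (Fin n) (R ⧸ m)) i j := by
    rw [← hcoe, hφg]
    rfl
  have hentry : Ideal.Quotient.mk m (Mg g i j) =
      Ideal.Quotient.mk m ((1 : Matrix (Fin n) (Fin n) R) i j) := by
    have h3 : (1 : Matrix (Fin n) (Fin n) (R ⧸ m)) i j =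
        Ideal.Quotient.mk m ((1 : Matrix (Fin n) (Fin n) R) i j) := by
      rw [Matrix.one_apply, Matrix.one_apply]
      split
      · exact (_root_.map_one _).symm
      · exact (_root_.map_zero _).symm
    have h2 : (Ideal.Quotient.mk m).mapMatrix (Mg g) i j =
        Ideal.Quotient.mk m (Mg g i j) := by
      rw [RingHom.mapMatrix_apply, Matrix.map_apply]
    rw [← h2, h1, h3]
  have hone1 : ((1 : Matrix (Fin n) (Fin n) R) i j : R) =
      ⟨(1 : Matrix (Fin n) (Fin n) F) i j, malcev_one_entry_mem R i j⟩ := by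
    apply Subtype.ext
    show ((1 : Matrix (Fin n) (Fin n) R) i j : F) = (1 : Matrix (Fin n) (Fin n) F) i j
    rw [Matrix.one_apply, Matrix.one_apply]
    split <;> simp
  have hmk0 : Ideal.Quotient.mk m a = 0 := by
    rw [ha_def, map_sub]
    have hMgg : Mg g i j = ⟨_, (hmem g).1 i j⟩ := rfl
    rw [← hMgg, ← hone1, hentry, sub_self]
  exact Ideal.Quotient.eq_zero_iff_mem.mp hmk0
end

section
/- If A and B are invertible c×c matrices over a field satisfying B A² B⁻¹ = A³, then B A B⁻¹ A⁻¹ B A⁻¹ B⁻¹ A = I. -/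
open Ideal in
instance instJacInt : IsJacobsonRing ℤ := by
  rw [isJacobsonRing_iff_prime_eq]
  intro P hP
  by_cases hbot : P = ⊥
  · subst hbot
    refine le_antisymm ?_ le_jacobson
    intro x hx
    rw [Ideal.mem_jacobson_bot] at hx
    have h1 := hx 1
    have h2 := hx 2
    rw [Int.isUnit_iff] at h1 h2
    simp only [Submodule.mem_bot]
    omega
  · haveI := hP
    exact jacobson_eq_self_of_isMaximal (H := IsPrime.to_maximal_ideal hbot)

lemma aux_grp {G : Type*} [Group G] [Finite G] (a b : G) (h : b * a ^ 2 * b⁻¹ = a ^ 3) :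
    b * a * b⁻¹ * a⁻¹ * (b * a⁻¹ * b⁻¹) * a = 1 := by
  have hn : 0 < orderOf a := orderOf_pos a
  set n := orderOf a with hndef
  have hconj : orderOf (b * a ^ 2 * b⁻¹) = orderOf (a ^ 2) := by
    have : b * a ^ 2 * b⁻¹ = (MulAut.conj b) (a ^ 2) := rfl
    rw [this, MulEquiv.orderOf_eq]
  have hord : n / n.gcd 2 = n / n.gcd 3 := by
    have h2 : orderOf (a ^ 2) = n / n.gcd 2 := orderOf_pow a
    have h3 : orderOf (a ^ 3) = n / n.gcd 3 := orderOf_pow a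
    rw [← h2, ← h3, ← hconj, h]
  have hgcd : n.gcd 2 = n.gcd 3 := by
    have d2 : n.gcd 2 ∣ n := Nat.gcd_dvd_left n 2
    have d3 : n.gcd 3 ∣ n := Nat.gcd_dvd_left n 3
    calc n.gcd 2 = n / (n / n.gcd 2) := (Nat.div_div_self d2 hn.ne').symm
    _ = n / (n / n.gcd 3) := by rw [hord]
    _ = n.gcd 3 := Nat.div_div_self d3 hn.ne'
  have hg1 : n.gcd 2 = 1 := by
    have hd2 : n.gcd 2 ∣ 2 := Nat.gcd_dvd_right n 2
    have hd3 : n.gcd 2 ∣ 3 := hgcd ▸ Nat.gcd_dvd_right n 3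
    exact Nat.dvd_one.mp ((Nat.dvd_sub hd3 hd2))
  rcases Nat.lt_or_ge n 2 with hn2 | hn2
  · have hn1 : n = 1 := by omega
    have ha1 : a = 1 := orderOf_eq_one_iff.mp (by rw [← hndef, hn1])
    subst ha1; simp
  · have hcop : n.Coprime 2 := hg1
    obtain ⟨m, -, hm⟩ := Nat.exists_mul_mod_eq_one_of_coprime hcop.symm hn2
    have hmod : 2 * m ≡ 1 [MOD n] := by
      unfold Nat.ModEq
      rw [hm, Nat.mod_eq_of_lt (by omega)]
    have ha : a ^ (2 * m) = a := by
      nth_rewrite 2 [← pow_one a]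
      rw [pow_eq_pow_iff_modEq, ← hndef]
      exact hmod
    have hc : b * a * b⁻¹ = a ^ (3 * m) := by
      calc b * a * b⁻¹ = b * a ^ (2 * m) * b⁻¹ := by rw [ha]
      _ = (b * a ^ 2 * b⁻¹) ^ m := by rw [conj_pow, ← pow_mul]
      _ = (a ^ 3) ^ m := by rw [h]
      _ = a ^ (3 * m) := by rw [← pow_mul]
    have hcinv : b * a⁻¹ * b⁻¹ = (a ^ (3 * m))⁻¹ := by
      rw [← hc]; group
    rw [hc, hcinv]
    group
lemma aux_field_finite (k : Type*) [Field k] [Module.Finite ℤ k] : Finite k := by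
  obtain ⟨p, hp⟩ := CharP.exists k
  rcases CharP.char_is_prime_or_zero k p with hpp | hp0
  · haveI : Fact p.Prime := ⟨hpp⟩
    letI : Algebra (ZMod p) k := ZMod.algebra k p
    haveI : Module.Finite (ZMod p) k := Module.Finite.of_restrictScalars_finite ℤ (ZMod p) k
    exact Module.finite_of_finite (ZMod p)
  · subst hp0
    haveI : CharZero k := CharP.charP_to_charZero k
    haveI : Algebra.IsIntegral ℤ k := Algebra.IsIntegral.of_finite ℤ k
    have h2 : IsIntegral ℤ ((algebraMap ℚ k) (1 / 2)) := Algebra.IsIntegral.isIntegral _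
    have h3 : IsIntegral ℤ ((1 : ℚ) / 2) :=
      IsIntegral.tower_bot (algebraMap ℚ k).injective h2
    obtain ⟨y, hy⟩ := IsIntegrallyClosed.isIntegral_iff.mp h3
    have hy' : (y : ℚ) = 1 / 2 := by exact_mod_cast hy
    have h4 : ((2 * y : ℤ) : ℚ) = 1 := by push_cast [hy']; norm_num
    have : (2 * y : ℤ) = 1 := by exact_mod_cast h4
    omega

set_option maxHeartbeats 1000000 in
set_option synthInstance.maxHeartbeats 400000 in
theorem stmt_10 {F : Type} [Field F] (c : ℕ) (hc : 1 ≤ c)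
    (A B : GL (Fin c) F) (h : B * A ^ 2 * B⁻¹ = A ^ 3) :
    B * A * B⁻¹ * A⁻¹ * (B * A⁻¹ * B⁻¹) * A = 1 := by
  classical
  by_contra hW
  set W : GL (Fin c) F := B * A * B⁻¹ * A⁻¹ * (B * A⁻¹ * B⁻¹) * A with hWdef
  have hWne : (W : Matrix (Fin c) (Fin c) F) ≠ 1 := fun hh => hW (Units.ext hh)
  obtain ⟨i0, j0, hij⟩ : ∃ i j, (W : Matrix (Fin c) (Fin c) F) i j ≠
      (1 : Matrix (Fin c) (Fin c) F) i j := by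
    by_contra hcon
    push_neg at hcon
    exact hWne (by ext i j; exact hcon i j)
  set r : F := (W : Matrix (Fin c) (Fin c) F) i0 j0 - (1 : Matrix (Fin c) (Fin c) F) i0 j0
    with hrdef
  have hr : r ≠ 0 := sub_ne_zero.mpr hij
  -- generators
  set M0 : Fin 4 → Matrix (Fin c) (Fin c) F :=
    ![(A : Matrix (Fin c) (Fin c) F), ((A⁻¹ : GL (Fin c) F) : Matrix (Fin c) (Fin c) F),
      (B : Matrix (Fin c) (Fin c) F), ((B⁻¹ : GL (Fin c) F) : Matrix (Fin c) (Fin c) F)]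
    with hM0def
  set s : Finset F := insert r⁻¹
    ((Finset.univ : Finset (Fin 4 × Fin c × Fin c)).image fun q => M0 q.1 q.2.1 q.2.2) with hsdef
  set R : Subalgebra ℤ F := Algebra.adjoin ℤ (s : Set F) with hRdef
  have hmem : ∀ t i j, M0 t i j ∈ R := by
    intro t i j
    apply Algebra.subset_adjoin
    simp only [hsdef, Finset.coe_insert, Set.mem_insert_iff, Finset.coe_image, Set.mem_image]
    exact Or.inr ⟨(t, i, j), by simp⟩
  have hrinvmem : r⁻¹ ∈ R := Algebra.subset_adjoin (by simp [hsdef])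
  haveI hFT : Algebra.FiniteType ℤ ↥R :=
    (Subalgebra.fg_iff_finiteType R).mp (by rw [hRdef]; exact Subalgebra.fg_adjoin_finset s)
  -- the inclusion ring hom
  set ι : ↥R →+* F := R.val.toRingHom with hιdef
  have hιinj : Function.Injective ι := Subtype.coe_injective
  have hmatinj : Function.Injective
      (fun X : Matrix (Fin c) (Fin c) ↥R => X.map ι) := by
    intro X Y hXY
    ext i j
    exact congrFun (congrFun hXY i) j
  -- matrices over R
  set MA : Matrix (Fin c) (Fin c) ↥R := Matrix.of fun i j => (⟨M0 0 i j, hmem 0 i j⟩ : ↥R)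
  set MAi : Matrix (Fin c) (Fin c) ↥R := Matrix.of fun i j => (⟨M0 1 i j, hmem 1 i j⟩ : ↥R)
  set MB : Matrix (Fin c) (Fin c) ↥R := Matrix.of fun i j => (⟨M0 2 i j, hmem 2 i j⟩ : ↥R)
  set MBi : Matrix (Fin c) (Fin c) ↥R := Matrix.of fun i j => (⟨M0 3 i j, hmem 3 i j⟩ : ↥R)
  have hmapMA : MA.map ι = (A : Matrix (Fin c) (Fin c) F) := by ext i j; rfl
  have hmapMAi : MAi.map ι = ((A⁻¹ : GL (Fin c) F) : Matrix (Fin c) (Fin c) F) := by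
    ext i j; rfl
  have hmapMB : MB.map ι = (B : Matrix (Fin c) (Fin c) F) := by ext i j; rfl
  have hmapMBi : MBi.map ι = ((B⁻¹ : GL (Fin c) F) : Matrix (Fin c) (Fin c) F) := by
    ext i j; rfl
  have hmapmul : ∀ X Y : Matrix (Fin c) (Fin c) ↥R, (X * Y).map ι = X.map ι * Y.map ι :=
    fun X Y => ι.mapMatrix.map_mul X Y
  have hmapone : (1 : Matrix (Fin c) (Fin c) ↥R).map ι = 1 := ι.mapMatrix.map_one
  have hA1 : MA * MAi = 1 := by
    apply hmatinj
    simp only [hmapmul, hmapone, hmapMA, hmapMAi]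
    exact A.mul_inv
  have hA2 : MAi * MA = 1 := by
    apply hmatinj
    simp only [hmapmul, hmapone, hmapMA, hmapMAi]
    exact A.inv_mul
  have hB1 : MB * MBi = 1 := by
    apply hmatinj
    simp only [hmapmul, hmapone, hmapMB, hmapMBi]
    exact B.mul_inv
  have hB2 : MBi * MB = 1 := by
    apply hmatinj
    simp only [hmapmul, hmapone, hmapMB, hmapMBi]
    exact B.inv_mul
  set At : GL (Fin c) ↥R := ⟨MA, MAi, hA1, hA2⟩ with hAtdef
  set Bt : GL (Fin c) ↥R := ⟨MB, MBi, hB1, hB2⟩ with hBtdef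
  set G : GL (Fin c) ↥R →* GL (Fin c) F := Matrix.GeneralLinearGroup.map (n := Fin c) ι
    with hGdef
  have hGinj : Function.Injective G := by
    intro X Y hXY
    exact Units.ext (hmatinj (congrArg Units.val hXY))
  have hGA : G At = A := Units.ext (by ext i j; rfl)
  have hGB : G Bt = B := Units.ext (by ext i j; rfl)
  have hrel : Bt * At ^ 2 * Bt⁻¹ = At ^ 3 := by
    apply hGinj
    rw [G.map_mul, G.map_mul, G.map_pow, G.map_inv, G.map_pow, hGA, hGB]
    exact h
  set Wt : GL (Fin c) ↥R := Bt * At * Bt⁻¹ * At⁻¹ * (Bt * At⁻¹ * Bt⁻¹) * At with hWtdef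
  have hGW : G Wt = W := by
    rw [hWtdef, hWdef]
    simp only [map_mul, map_inv, hGA, hGB]
  -- quotient by maximal ideal
  haveI : Nontrivial ↥R := nontrivial_of_ne 0 1
    (fun hh => one_ne_zero (α := F) (congrArg Subtype.val hh).symm)
  obtain ⟨mI, hmI⟩ := Ideal.exists_maximal ↥R
  haveI := hmI
  letI kk := ↥R ⧸ mI
  letI : Field kk := Ideal.Quotient.field mI
  haveI : Algebra.FiniteType ℤ kk :=
    Algebra.FiniteType.of_surjective (Ideal.Quotient.mkₐ ℤ mI)
      (Ideal.Quotient.mkₐ_surjective ℤ mI)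
  haveI : Module.Finite ℤ kk := finite_of_finite_type_of_isJacobsonRing ℤ kk
  haveI : Finite kk := aux_field_finite kk
  haveI : Finite (GL (Fin c) kk) := by
    have : Finite (Matrix (Fin c) (Fin c) kk) := by infer_instance
    exact Finite.of_injective (Units.val : GL (Fin c) kk → Matrix (Fin c) (Fin c) kk)
      (fun _ _ hh => Units.ext hh)
  set φ : ↥R →+* kk := Ideal.Quotient.mk mI with hφdef
  set Gφ : GL (Fin c) ↥R →* GL (Fin c) kk := Matrix.GeneralLinearGroup.map (n := Fin c) φ
    with hGφdef
  have hrel2 : (Gφ Bt) * (Gφ At) ^ 2 * (Gφ Bt)⁻¹ = (Gφ At) ^ 3 := by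
    rw [← Gφ.map_pow, ← Gφ.map_inv, ← Gφ.map_mul, ← Gφ.map_mul, hrel, Gφ.map_pow]
  have hone := aux_grp (Gφ At) (Gφ Bt) hrel2
  have hφW : Gφ Wt = 1 := by
    rw [hWtdef]
    simp only [map_mul, map_inv]
    exact hone
  -- extract entry
  have hφWmat : ((Gφ Wt : Matrix (Fin c) (Fin c) kk)) = 1 := by rw [hφW]; rfl
  have hφentry : φ ((Wt : Matrix (Fin c) (Fin c) ↥R) i0 j0) =
      (1 : Matrix (Fin c) (Fin c) kk) i0 j0 := by
    have hh : ((Wt : Matrix (Fin c) (Fin c) ↥R).map φ) = (1 : Matrix (Fin c) (Fin c) kk) := by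
      rw [show (Wt : Matrix (Fin c) (Fin c) ↥R).map φ
          = (Gφ Wt : Matrix (Fin c) (Fin c) kk) from rfl, hφWmat]
    exact congrFun (congrFun hh i0) j0
  set r' : ↥R := (Wt : Matrix (Fin c) (Fin c) ↥R) i0 j0 - (1 : Matrix (Fin c) (Fin c) ↥R) i0 j0
    with hr'def
  have hιWt : ι ((Wt : Matrix (Fin c) (Fin c) ↥R) i0 j0)
      = (W : Matrix (Fin c) (Fin c) F) i0 j0 := by
    have hh : ((Wt : Matrix (Fin c) (Fin c) ↥R).map ι) = (W : Matrix (Fin c) (Fin c) F) := by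
      rw [show (Wt : Matrix (Fin c) (Fin c) ↥R).map ι
          = (G Wt : Matrix (Fin c) (Fin c) F) from rfl, hGW]
    exact congrFun (congrFun hh i0) j0
  have hιone : ι ((1 : Matrix (Fin c) (Fin c) ↥R) i0 j0)
      = (1 : Matrix (Fin c) (Fin c) F) i0 j0 := congrFun (congrFun hmapone i0) j0
  have hιr' : ι r' = r := by
    rw [hr'def, map_sub, hιWt, hιone, hrdef]
  have hr'unit : IsUnit r' := by
    refine IsUnit.of_mul_eq_one (a := r') ⟨r⁻¹, hrinvmem⟩ ?_
    apply hιinj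
    rw [map_mul, hιr', map_one]
    exact mul_inv_cancel₀ hr
  have hφone : φ ((1 : Matrix (Fin c) (Fin c) ↥R) i0 j0)
      = (1 : Matrix (Fin c) (Fin c) kk) i0 j0 :=
    congrFun (congrFun (φ.mapMatrix.map_one) i0) j0
  have hφr' : φ r' = 0 := by
    rw [hr'def, map_sub, hφentry, hφone, sub_self]
  have hr'mem : r' ∈ mI := Ideal.Quotient.eq_zero_iff_mem.mp hφr'
  exact hmI.ne_top (Ideal.eq_top_of_isUnit_mem mI hr'mem hr'unit)
end

section
/- Let D be a division ring and let O, a, b, c, d be five points in the projective plane DP² such that O, a, b are collinear and distinct, O, c, d are collinear and distinct, and the lines through {O,a,b} and {O,c,d} are distinct. Then there is a projective transformation of DP² (induced by an invertible 3×3 matrix acting on the left) taking O, a, b, c, d to [1:0:0], [1:1:0], [0:1:0], [1:0:1], [0:0:1] respectively. -/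
/-- Three vectors of `D³` (viewed as a *right* `D`-vector space) are right
linearly dependent. -/
def RightDep {D : Type} [DivisionRing D] (u v w : Fin 3 → D) : Prop :=
  ∃ l₁ l₂ l₃ : D, ¬ (l₁ = 0 ∧ l₂ = 0 ∧ l₃ = 0) ∧
    (fun i => u i * l₁ + v i * l₂ + w i * l₃) = 0

/-- Two nonzero vectors represent the same point of the right projective plane:
they differ by a right scalar. -/
def RightProp {D : Type} [DivisionRing D] (u v : Fin 3 → D) : Prop :=
  ∃ l : D, l ≠ 0 ∧ v = fun i => u i * l

open MulOpposite in
/-- From collinearity and distinctness, write the middle point as a combination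
with nonzero coefficients. -/
lemma extract_comb {D : Type} [DivisionRing D] (O a b : Fin 3 → D)
    (hO : O ≠ 0) (ha : a ≠ 0) (hb : b ≠ 0)
    (hdep : RightDep O a b) (hOa : ¬ RightProp O a) (hOb : ¬ RightProp O b)
    (hab : ¬ RightProp a b) :
    ∃ α β : D, α ≠ 0 ∧ β ≠ 0 ∧ a = fun i => O i * α + b i * β := by
  obtain ⟨l₁, l₂, l₃, hne, heq⟩ := hdep
  have h : ∀ i, O i * l₁ + a i * l₂ + b i * l₃ = 0 := fun i => congrFun heq i
  have hl₂ : l₂ ≠ 0 := by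
    intro h2
    by_cases h1 : l₁ = 0
    · have h3 : l₃ ≠ 0 := fun h3 => hne ⟨h1, h2, h3⟩
      apply hb; funext i
      have hi := h i
      rw [h1, h2] at hi
      simp only [mul_zero, zero_add, add_zero] at hi
      exact (mul_eq_zero.mp hi).resolve_right h3
    · by_cases h3 : l₃ = 0
      · apply hO; funext i
        have hi := h i
        rw [h2, h3] at hi
        simp only [mul_zero, add_zero] at hi
        exact (mul_eq_zero.mp hi).resolve_right h1
      · apply hOb
        refine ⟨-l₁ * l₃⁻¹, mul_ne_zero (neg_ne_zero.mpr h1) (inv_ne_zero h3), ?_⟩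
        funext i
        have hi := h i
        rw [h2] at hi
        simp only [mul_zero, add_zero] at hi
        have hbl : b i * l₃ = -(O i * l₁) := eq_neg_of_add_eq_zero_right hi
        calc b i = b i * l₃ * l₃⁻¹ := by rw [mul_assoc, mul_inv_cancel₀ h3, mul_one]
        _ = -(O i * l₁) * l₃⁻¹ := by rw [hbl]
        _ = O i * (-l₁ * l₃⁻¹) := by noncomm_ring
  have hkey : a = fun i => O i * (-l₁ * l₂⁻¹) + b i * (-l₃ * l₂⁻¹) := by
    funext i
    have hi := h i
    have hal : a i * l₂ = -(O i * l₁) - b i * l₃ := by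
      have h' : O i * l₁ + b i * l₃ + a i * l₂ = 0 := by rw [← hi]; abel
      have := eq_neg_of_add_eq_zero_right h'
      rw [this]; abel
    calc a i = a i * l₂ * l₂⁻¹ := by rw [mul_assoc, mul_inv_cancel₀ hl₂, mul_one]
    _ = (-(O i * l₁) - b i * l₃) * l₂⁻¹ := by rw [hal]
    _ = O i * (-l₁ * l₂⁻¹) + b i * (-l₃ * l₂⁻¹) := by noncomm_ring
  have h1 : l₁ ≠ 0 := by
    intro h1
    by_cases h3 : l₃ = 0
    · apply ha; rw [hkey]; funext i; simp [h1, h3]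
    · apply hab
      have hβ : (-l₃ * l₂⁻¹) ≠ 0 := mul_ne_zero (neg_ne_zero.mpr h3) (inv_ne_zero hl₂)
      refine ⟨(-l₃ * l₂⁻¹)⁻¹, inv_ne_zero hβ, ?_⟩
      funext i
      have hai : a i = b i * (-l₃ * l₂⁻¹) := by rw [hkey]; simp [h1]
      rw [hai, mul_assoc, mul_inv_cancel₀ hβ, mul_one]
  have h3 : l₃ ≠ 0 := by
    intro h3
    apply hOa
    refine ⟨-l₁ * l₂⁻¹, mul_ne_zero (neg_ne_zero.mpr h1) (inv_ne_zero hl₂), ?_⟩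
    funext i
    rw [hkey]; simp [h3]
  exact ⟨-l₁ * l₂⁻¹, -l₃ * l₂⁻¹,
    mul_ne_zero (neg_ne_zero.mpr h1) (inv_ne_zero hl₂),
    mul_ne_zero (neg_ne_zero.mpr h3) (inv_ne_zero hl₂), hkey⟩

/-- Evaluate a linear endomorphism of `Fin 3 → R` via its values on the
standard "single" vectors. -/
lemma linear_apply_eq_sum {R : Type*} [Ring R]
    (e : (Fin 3 → R) →ₗ[R] (Fin 3 → R)) (w : Fin 3 → R) (j : Fin 3) :
    e w j = ∑ k, w k * e (Pi.single k 1) j := by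
  have hw : w = ∑ k : Fin 3, w k • (Pi.single k (1:R) : Fin 3 → R) := by
    funext i
    rw [Finset.sum_apply]
    simp [Pi.single_apply, mul_ite]
  conv_lhs => rw [hw]
  rw [map_sum, Finset.sum_apply]
  simp [map_smul]

theorem stmt_13 {D : Type} [DivisionRing D] (O a b c d : Fin 3 → D)
    (hO : O ≠ 0) (ha : a ≠ 0) (hb : b ≠ 0) (hc : c ≠ 0) (hd : d ≠ 0)
    -- O, a, b are collinear and represent pairwise distinct projective points
    (hOab : RightDep O a b) (hOa : ¬ RightProp O a) (hOb : ¬ RightProp O b)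
    (hab : ¬ RightProp a b)
    -- O, c, d are collinear and represent pairwise distinct projective points
    (hOcd : RightDep O c d) (hOc : ¬ RightProp O c) (hOd : ¬ RightProp O d)
    (hcd : ¬ RightProp c d)
    -- the two lines are distinct
    (hlines : ¬ RightDep O b d) :
    ∃ (M : Matrix (Fin 3) (Fin 3) D), IsUnit M ∧
      ∃ (sO sa sb sc sd : Dˣ),
        M.mulVec O = ![(sO : D), 0, 0] ∧
        M.mulVec a = ![(sa : D), (sa : D), 0] ∧
        M.mulVec b = ![0, (sb : D), 0] ∧
        M.mulVec c = ![(sc : D), 0, (sc : D)] ∧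
        M.mulVec d = ![0, 0, (sd : D)] := by
  classical
  open MulOpposite in
  obtain ⟨α, β, hα, hβ, haeq⟩ := extract_comb O a b hO ha hb hOab hOa hOb hab
  obtain ⟨γ, δ, hγ, hδ, hceq⟩ := extract_comb O c d hO hc hd hOcd hOc hOd hcd
  have hμ : δ * γ⁻¹ * α ≠ 0 := mul_ne_zero (mul_ne_zero hδ (inv_ne_zero hγ)) hα
  set μ : D := δ * γ⁻¹ * α with hμdef
  -- the three independent column vectors, transported to the opposite ring
  set f : Fin 3 → (Fin 3 → Dᵐᵒᵖ) :=
    ![fun i => op (O i * α), fun i => op (b i * β), fun i => op (d i * μ)] with hfdef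
  have hindep : ∀ l₁ l₂ l₃ : D,
      (∀ i, O i * α * l₁ + b i * β * l₂ + d i * μ * l₃ = 0) →
      l₁ = 0 ∧ l₂ = 0 ∧ l₃ = 0 := by
    intro l₁ l₂ l₃ hsum
    by_contra hcon
    apply hlines
    refine ⟨α * l₁, β * l₂, μ * l₃, ?_, funext fun i => by
      simpa [mul_assoc] using hsum i⟩
    rintro ⟨e1, e2, e3⟩
    exact hcon ⟨(mul_eq_zero.mp e1).resolve_left hα, (mul_eq_zero.mp e2).resolve_left hβ,
      (mul_eq_zero.mp e3).resolve_left hμ⟩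
  have hli : LinearIndependent Dᵐᵒᵖ f := by
    rw [Fintype.linearIndependent_iff]
    intro g hg
    have h0 : ∀ i, g 0 * f 0 i + g 1 * f 1 i + g 2 * f 2 i = 0 := by
      intro i
      simpa [Fin.sum_univ_three] using congrFun hg i
    have hg' : ∀ i,
        O i * α * (g 0).unop + b i * β * (g 1).unop + d i * μ * (g 2).unop = 0 := by
      intro i
      apply op_injective
      calc op (O i * α * (g 0).unop + b i * β * (g 1).unop + d i * μ * (g 2).unop)
          = g 0 * f 0 i + g 1 * f 1 i + g 2 * f 2 i := by
            simp [hfdef, mul_assoc]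
        _ = 0 := h0 i
    obtain ⟨e1, e2, e3⟩ := hindep _ _ _ hg'
    intro i
    fin_cases i
    · exact (MulOpposite.unop_eq_zero_iff _).mp e1
    · exact (MulOpposite.unop_eq_zero_iff _).mp e2
    · exact (MulOpposite.unop_eq_zero_iff _).mp e3
  -- a basis of (Fin 3 → Dᵐᵒᵖ) and the linear equivalence to the standard basis
  set B := basisOfLinearIndependentOfCardEqFinrank hli (by simp) with hBdef
  have hBf : ∀ j, B j = f j := fun j =>
    congrFun (coe_basisOfLinearIndependentOfCardEqFinrank hli (by simp)) j
  set e : (Fin 3 → Dᵐᵒᵖ) ≃ₗ[Dᵐᵒᵖ] (Fin 3 → Dᵐᵒᵖ) :=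
    B.equiv (Pi.basisFun Dᵐᵒᵖ (Fin 3)) (Equiv.refl _) with hedef
  have hef : ∀ j, e (f j) = Pi.single j 1 := by
    intro j
    rw [← hBf j, hedef, Module.Basis.equiv_apply]
    simp
  -- the matrices of e and e.symm
  set A : Matrix (Fin 3) (Fin 3) Dᵐᵒᵖ := Matrix.of fun i j => e (Pi.single i 1) j with hAdef
  set A' : Matrix (Fin 3) (Fin 3) Dᵐᵒᵖ := Matrix.of fun i j => e.symm (Pi.single i 1) j
    with hA'def
  have hvA : ∀ (w : Fin 3 → Dᵐᵒᵖ) (j : Fin 3), ∑ k, w k * A k j = e w j :=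
    fun w j => (linear_apply_eq_sum e.toLinearMap w j).symm
  have hvA' : ∀ (w : Fin 3 → Dᵐᵒᵖ) (j : Fin 3), ∑ k, w k * A' k j = e.symm w j :=
    fun w j => (linear_apply_eq_sum e.symm.toLinearMap w j).symm
  have hAA' : A * A' = 1 := by
    ext i j
    rw [Matrix.mul_apply]
    have h2 : (fun k => A i k) = e (Pi.single i 1) := rfl
    rw [hvA' (fun k => A i k) j, h2, e.symm_apply_apply]
    by_cases h : i = j <;> simp [Matrix.one_apply, Pi.single_apply, h]
  have hA'A : A' * A = 1 := by
    ext i j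
    rw [Matrix.mul_apply]
    have h2 : (fun k => A' i k) = e.symm (Pi.single i 1) := rfl
    rw [hvA (fun k => A' i k) j, h2, e.apply_symm_apply]
    by_cases h : i = j <;> simp [Matrix.one_apply, Pi.single_apply, h]
  -- transport to matrices over D
  set M : Matrix (Fin 3) (Fin 3) D := Matrix.of fun i j => (A j i).unop with hMdef
  set N : Matrix (Fin 3) (Fin 3) D := Matrix.of fun i j => (A' j i).unop with hNdef
  have hMN : M * N = 1 := by
    ext i j
    rw [Matrix.mul_apply]
    calc ∑ k, M i k * N k j = ∑ k, (A' j k * A k i).unop := by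
          refine Finset.sum_congr rfl fun k _ => ?_
          simp [hMdef, hNdef]
      _ = ((A' * A) j i).unop := by rw [Matrix.mul_apply, Finset.unop_sum]
      _ = ((1 : Matrix (Fin 3) (Fin 3) Dᵐᵒᵖ) j i).unop := by rw [hA'A]
      _ = (1 : Matrix (Fin 3) (Fin 3) D) i j := by
          by_cases h : i = j <;> simp [Matrix.one_apply, h]
          · exact fun h' => absurd h'.symm h
  have hNM : N * M = 1 := by
    ext i j
    rw [Matrix.mul_apply]
    calc ∑ k, N i k * M k j = ∑ k, (A j k * A' k i).unop := by
          refine Finset.sum_congr rfl fun k _ => ?_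
          simp [hMdef, hNdef]
      _ = ((A * A') j i).unop := by rw [Matrix.mul_apply, Finset.unop_sum]
      _ = ((1 : Matrix (Fin 3) (Fin 3) Dᵐᵒᵖ) j i).unop := by rw [hAA']
      _ = (1 : Matrix (Fin 3) (Fin 3) D) i j := by
          by_cases h : i = j <;> simp [Matrix.one_apply, h]
          · exact fun h' => absurd h'.symm h
  -- the key computation: mulVec of a right combination of the columns
  have hmul : ∀ (w : Fin 3 → D) (c₁ c₂ c₃ : D),
      (∀ i, w i = O i * α * c₁ + b i * β * c₂ + d i * μ * c₃) →
      M.mulVec w = ![c₁, c₂, c₃] := by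
    intro w c₁ c₂ c₃ hw
    have hop : (fun j => op (w j)) = op c₁ • f 0 + op c₂ • f 1 + op c₃ • f 2 := by
      funext j
      rw [hw j]
      simp [hfdef, mul_assoc]
    funext i
    calc M.mulVec w i = ∑ j, M i j * w j := rfl
      _ = ∑ j, (op (w j) * A j i).unop := by
            refine Finset.sum_congr rfl fun j _ => ?_
            simp [hMdef]
      _ = (∑ j, op (w j) * A j i).unop := by rw [Finset.unop_sum]
      _ = (e (fun j => op (w j)) i).unop := by rw [hvA]
      _ = ((op c₁ • e (f 0) + op c₂ • e (f 1) + op c₃ • e (f 2)) i).unop := by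
            rw [hop]; simp
      _ = ![c₁, c₂, c₃] i := by
            rw [hef 0, hef 1, hef 2]
            fin_cases i <;> simp [Pi.single_apply]
  -- put everything together
  refine ⟨M, ⟨⟨M, N, hMN, hNM⟩, rfl⟩,
    Units.mk0 α⁻¹ (inv_ne_zero hα), 1, Units.mk0 β⁻¹ (inv_ne_zero hβ),
    Units.mk0 (α⁻¹ * γ) (mul_ne_zero (inv_ne_zero hα) hγ),
    Units.mk0 μ⁻¹ (inv_ne_zero hμ), ?_, ?_, ?_, ?_, ?_⟩
  · exact hmul O α⁻¹ 0 0 fun i => by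
      simp [mul_assoc, mul_inv_cancel₀ hα]
  · exact hmul a 1 1 0 fun i => by
      rw [congrFun haeq i]; simp
  · exact hmul b 0 β⁻¹ 0 fun i => by
      simp [mul_assoc, mul_inv_cancel₀ hβ]
  · exact hmul c (α⁻¹ * γ) 0 (α⁻¹ * γ) fun i => by
      rw [congrFun hceq i, hμdef]
      simp [mul_assoc, mul_inv_cancel_left₀ hα, inv_mul_cancel₀ hγ]
  · exact hmul d 0 0 μ⁻¹ fun i => by
      simp [mul_assoc, mul_inv_cancel₀ hμ]
end

section
/- Let D be a division ring and a_i, a_j, a_k ∈ D. The three vectors (1, a_i, 0), (1, 0, a_k), (0, a_j, −1) in D³ (as a right D-vector space) are right linearly dependent if and only if a_i = a_j · a_k. -/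
theorem stmt_14 {D : Type} [DivisionRing D] (ai aj ak : D) :
    (∃ l₁ l₂ l₃ : D, ¬ (l₁ = 0 ∧ l₂ = 0 ∧ l₃ = 0) ∧
        (fun t => ![(1 : D), ai, 0] t * l₁ + ![(1 : D), 0, ak] t * l₂ +
          ![(0 : D), aj, -1] t * l₃) = 0)
      ↔ ai = aj * ak := by
  constructor
  · rintro ⟨l₁, l₂, l₃, hne, hf⟩
    have h0 := congrFun hf 0
    have h1 := congrFun hf 1
    have h2 := congrFun hf 2
    simp at h0 h1 h2
    have hl2 : l₂ = -l₁ := eq_neg_of_add_eq_zero_right h0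
    have hl3 : l₃ = -(ak * l₁) := by
      have : ak * l₂ = l₃ := by
        have := eq_neg_of_add_eq_zero_left h2
        rw [this, neg_neg]
      rw [← this, hl2, mul_neg]
    have hl1 : l₁ ≠ 0 := by
      intro h
      exact hne ⟨h, by rw [hl2, h, neg_zero], by rw [hl3, h, mul_zero, neg_zero]⟩
    have key : ai * l₁ = aj * ak * l₁ := by
      rw [hl3, mul_neg] at h1
      have := eq_neg_of_add_eq_zero_left h1
      rw [this, neg_neg, mul_assoc]
    exact mul_right_cancel₀ hl1 key
  · intro h
    refine ⟨1, -1, -ak, fun hc => one_ne_zero hc.1, ?_⟩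
    funext t
    fin_cases t <;> simp [h, mul_assoc]
end

section
/- Let D be a division ring and a_i, a_j, a_k ∈ D. The three vectors (1, a_i, 0), (1, a_k, 1), (0, a_j, −1) in the right D-vector space D³ are right linearly dependent if and only if a_i = a_j + a_k. -/
theorem stmt_15 {D : Type} [DivisionRing D] (ai aj ak : D) :
    (∃ l₁ l₂ l₃ : D, ¬ (l₁ = 0 ∧ l₂ = 0 ∧ l₃ = 0) ∧
        (fun t => ![(1 : D), ai, 0] t * l₁ + ![(1 : D), ak, 1] t * l₂ +
          ![(0 : D), aj, -1] t * l₃) = 0)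
      ↔ ai = aj + ak := by
  constructor
  · rintro ⟨l₁, l₂, l₃, hne, h⟩
    have h0 := congrFun h 0
    have h1 := congrFun h 1
    have h2 := congrFun h 2
    simp at h0 h1 h2
    -- h0 : l₁ + l₂ = 0, h1 : ai*l₁ + ak*l₂ + aj*l₃ = 0, h2 : l₂ + -l₃ = 0
    have hl1 : l₁ = -l₂ := eq_neg_of_add_eq_zero_left h0
    have hl3 : l₂ = l₃ := by
      have := eq_neg_of_add_eq_zero_left h2; simpa using this
    subst hl1 hl3
    have hl2 : l₂ ≠ 0 := fun hz => hne (by simp [hz])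
    have key : (-ai + ak + aj) * l₂ = 0 := by
      rw [add_mul, add_mul, neg_mul, mul_neg] at *
      exact h1
    have h3 : -ai + ak + aj = 0 := (mul_eq_zero.mp key).resolve_right hl2
    have h3' : -ai + (ak + aj) = 0 := by rw [← add_assoc]; exact h3
    have := neg_add_eq_zero.mp h3'
    rw [this, add_comm]
  · intro h
    refine ⟨-1, 1, 1, by simp, ?_⟩
    funext t
    fin_cases t <;> simp [h]
end
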